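/- Let u = u_1 u_2 ⋯ u_N be a linear universal partial word for A^n over A = {0,1,…,α-1} with n ≥ 2, such that u_k = ◊ and u_{k+n} ≠ ◊ (with k + n ≤ N). Then for every i = 1,2,…,n-1, if u_i ≠ ◊ then u_{k+i} = u_i. Moreover, if u_n ≠ ◊ then α = 2 and u_{k+n} is the complement of u_n. -/

import Mathlib

/-- A partial-word symbol over the alphabet `Fin α`: `none` is the wildcard `◊`. -/
abbrev PSym (α : ℕ) := Option (Fin α)

/-- The word `v ∈ A^*` appears as a factor of the partial word `u` at 0-based position `i`:
each symbol of `u` in the window is either `◊` or equals the corresponding letter of `v`. -/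
def MatchAt {α : ℕ} (u : List (PSym α)) (v : List (Fin α)) (i : ℕ) : Prop :=
  i + v.length ≤ u.length ∧
    ∀ j < v.length, u[i + j]? = some none ∨ u[i + j]? = (v[j]?).map some

/-- `u` is a linear universal partial word (upword) for `A^n`, `A = Fin α`:
every word of length `n` over `A` appears exactly once as a factor. -/
def IsLinearUpword (α n : ℕ) (u : List (PSym α)) : Prop :=
  ∀ v : List (Fin α), v.length = n → ∃! i : ℕ, MatchAt u v i

/-- `v` appears as a cyclic factor of the partial word `u` at position `i`
(indices taken modulo `u.length`). -/
def CycMatchAt {α : ℕ} (u : List (PSym α)) (v : List (Fin α)) (i : ℕ) : Prop :=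
  ∀ j < v.length,
    u[(i + j) % u.length]? = some none ∨ u[(i + j) % u.length]? = (v[j]?).map some

/-- `u` is a cyclic universal partial word for `A^n`: every word of length `n` over `A`
appears exactly once as a cyclic factor. -/
def IsCyclicUpword (α n : ℕ) (u : List (PSym α)) : Prop :=
  ∀ v : List (Fin α), v.length = n → ∃! i : ℕ, i < u.length ∧ CycMatchAt u v i

/-- The canonical word of length `n` matching the window of `u` starting at `k`,
with default letters `d j` at wildcard positions. -/
def fillW (α : ℕ) (u : List (PSym α)) (k n : ℕ) (d : ℕ → Fin α) : List (Fin α) :=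
  (List.range n).map fun j => (u[k + j]?.join).getD (d j)

theorem fillW_length (α : ℕ) (u : List (PSym α)) (k n : ℕ) (d : ℕ → Fin α) :
    (fillW α u k n d).length = n := by simp [fillW]

theorem fillW_getElem? (α : ℕ) (u : List (PSym α)) (k n : ℕ) (d : ℕ → Fin α)
    {j : ℕ} (hj : j < n) :
    (fillW α u k n d)[j]? = some ((u[k + j]?.join).getD (d j)) := by
  simp [fillW, List.getElem?_range hj]

theorem fillW_matchAt {α : ℕ} {u : List (PSym α)} {k n : ℕ} (h : k + n ≤ u.length)
    (d : ℕ → Fin α) : MatchAt u (fillW α u k n d) k := by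
  refine ⟨by rw [fillW_length]; omega, ?_⟩
  intro j hj
  rw [fillW_length] at hj
  have hlt : k + j < u.length := by omega
  have hs : u[k + j]? = some (u[k + j]'hlt) := List.getElem?_eq_getElem hlt
  cases hc : u[k + j]'hlt with
  | none => left; rw [hs, hc]
  | some x =>
    right
    rw [fillW_getElem? α u k n d hj, hs, hc]
    rfl

theorem prefix_match {α : ℕ} {u : List (PSym α)} {n p : ℕ} (hn : 1 ≤ n) (hp : 1 ≤ p)
    (hplen : p + n ≤ u.length) {t : List (Fin α)} (ht : t.length = n - 1) {c : Fin α}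
    (hd : u[p - 1]? = some none ∨ u[p - 1]? = some (some c))
    (hm : ∀ j < n - 1, u[p + j]? = some none ∨ u[p + j]? = (t[j]?).map some) :
    MatchAt u (c :: t) (p - 1) := by
  constructor
  · simp only [List.length_cons, ht]; omega
  · intro j hj
    simp only [List.length_cons, ht] at hj
    cases j with
    | zero =>
      rcases hd with h | h
      · left; simpa using h
      · right; simpa using h
    | succ j' =>
      have e : p - 1 + (j' + 1) = p + j' := by omega
      rw [e, List.getElem?_cons_succ]
      exact hm j' (by omega)

theorem match_unique {α n : ℕ} {u : List (PSym α)} (hu : IsLinearUpword α n u)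
    {v : List (Fin α)} (hv : v.length = n) {p q : ℕ}
    (h1 : MatchAt u v p) (h2 : MatchAt u v q) : p = q := by
  obtain ⟨r, hr, hruniq⟩ := hu v hv
  rw [hruniq p h1, hruniq q h2]

/-- constraint lemma; indices are 1-based as in the paper.
Let `u = u_1 ⋯ u_N` be a linear upword for `A^n`, `A = {0,…,α-1}`, `n ≥ 2`, with `u_k = ◊`
and `u_{k+n} ≠ ◊` (where `k + n ≤ N`). Then for all `i = 1,…,n-1`, if `u_i ≠ ◊` then
`u_{k+i} = u_i`; moreover, if `u_n ≠ ◊` then `α = 2` and `u_{k+n}` is the complement of `u_n`. -/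
theorem upword_constraint (α n N k : ℕ) (hα : 2 ≤ α) (hn : 2 ≤ n)
    (u : List (PSym α)) (hN : u.length = N)
    (hu : IsLinearUpword α n u)
    (hk1 : 1 ≤ k) (hkn : k + n ≤ N)
    (hk : u[k - 1]? = some none)
    (hknd : u[k + n - 1]? ≠ some none) :
    (∀ i, 1 ≤ i → i ≤ n - 1 → u[i - 1]? ≠ some none → u[k + i - 1]? = u[i - 1]?) ∧
    (u[n - 1]? ≠ some none →
      α = 2 ∧ ∀ x : Fin α, u[n - 1]? = some (some x) →
        ∃ y : Fin α, y ≠ x ∧ u[k + n - 1]? = some (some y)) := by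
  subst hN
  have hcard : 1 < Fintype.card (Fin α) := by rw [Fintype.card_fin]; omega
  -- the last symbol of the window after the diamond is a concrete letter `a`
  obtain ⟨a, ha⟩ : ∃ a : Fin α, u[k + n - 1]? = some (some a) := by
    have hlt : k + n - 1 < u.length := by omega
    have hs : u[k + n - 1]? = some (u[k + n - 1]'hlt) := List.getElem?_eq_getElem hlt
    cases hc : u[k + n - 1]'hlt with
    | none => exact absurd (by rw [hs, hc]) hknd
    | some a => exact ⟨a, by rw [hs, hc]⟩
  -- T d : the first n-1 letters of the canonical word matching the window starting at k
  set T : (ℕ → Fin α) → List (Fin α) := fun d => (fillW α u k n d).take (n - 1) with hT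
  have hTlen : ∀ d, (T d).length = n - 1 := by
    intro d; simp [hT, fillW_length]
  have hTget : ∀ d, ∀ j < n - 1, (T d)[j]? = (fillW α u k n d)[j]? := by
    intro d j hj; simp [hT, List.getElem?_take_of_lt hj]
  have hTmatch : ∀ d, ∀ j < n - 1,
      u[k + j]? = some none ∨ u[k + j]? = ((T d)[j]?).map some := by
    intro d j hj
    rw [hTget d j hj]
    exact (fillW_matchAt (by omega) d).2 j (by rw [fillW_length]; omega)
  have hprefix : ∀ d (c : Fin α), MatchAt u (c :: T d) (k - 1) := by
    intro d c
    exact prefix_match (by omega) hk1 (by omega) (hTlen d) (Or.inl hk) (hTmatch d)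
  have hclen : ∀ d (c : Fin α), (c :: T d).length = n := by
    intro d c; simp [hTlen d]; omega
  have hblen : ∀ d (b : Fin α), (T d ++ [b]).length = n := by
    intro d b; simp [hTlen d]; omega
  have hbget : ∀ d (b : Fin α), (T d ++ [b])[n - 1]? = some b := by
    intro d b
    rw [List.getElem?_append_right (by rw [hTlen d])]
    simp [hTlen d]
  -- key claim: for every d and every b ≠ a, the word (T d) ++ [b] matches at position 0
  have hmain : ∀ d, ∀ b : Fin α, b ≠ a → MatchAt u (T d ++ [b]) 0 := by
    intro d b hb
    obtain ⟨p, hp, hpuniq⟩ := hu (T d ++ [b]) (hblen d b)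
    have hp0 : p = 0 := by
      by_contra hp0
      have hp1 : 1 ≤ p := Nat.one_le_iff_ne_zero.mpr hp0
      have hplen : p + n ≤ u.length := by
        have := hp.1; rwa [hblen d b] at this
      have hm' : ∀ j < n - 1, u[p + j]? = some none ∨ u[p + j]? = ((T d)[j]?).map some := by
        intro j hj
        have h2 := hp.2 j (by rw [hblen d b]; omega)
        rwa [List.getElem?_append_left (by rw [hTlen d]; omega)] at h2
      have hplt : p - 1 < u.length := by omega
      have hs : u[p - 1]? = some (u[p - 1]'hplt) := List.getElem?_eq_getElem hplt
      have hpk : p = k := by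
        cases hc : u[p - 1]'hplt with
        | none =>
          have h1 : MatchAt u (a :: T d) (p - 1) :=
            prefix_match (by omega) hp1 hplen (hTlen d) (Or.inl (by rw [hs, hc])) hm'
          have := match_unique hu (hclen d a) h1 (hprefix d a)
          omega
        | some c =>
          have h1 : MatchAt u (c :: T d) (p - 1) :=
            prefix_match (by omega) hp1 hplen (hTlen d) (Or.inr (by rw [hs, hc])) hm'
          have hpq := match_unique hu (hclen d c) h1 (hprefix d c)
          have : u[p - 1]? = some none := by rw [show p - 1 = k - 1 from hpq]; exact hk
          rw [hs, hc] at this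
          exact absurd (Option.some.inj this) (by simp)
      -- then the last letter of the window forces b = a, contradiction
      have h2 := hp.2 (n - 1) (by rw [hblen d b]; omega)
      rw [hbget d b, hpk, show k + (n - 1) = k + n - 1 by omega, ha] at h2
      rcases h2 with h | h
      · exact absurd h (by simp)
      · exact hb (Option.some.inj (Option.some.inj h.symm))
    rw [hp0] at hp
    exact hp
  -- consequence: for j < n-1, u[j]? matches (T d)[j]?, and u[n-1]? matches b
  have hmatch0 : ∀ d, ∀ b : Fin α, b ≠ a → ∀ j < n - 1,
      u[j]? = some none ∨ u[j]? = ((T d)[j]?).map some := by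
    intro d b hb j hj
    have h2 := (hmain d b hb).2 j (by rw [hblen d b]; omega)
    rw [Nat.zero_add, List.getElem?_append_left (by rw [hTlen d]; omega)] at h2
    exact h2
  have hmatchlast : ∀ b : Fin α, b ≠ a →
      u[n - 1]? = some none ∨ u[n - 1]? = some (some b) := by
    intro b hb
    have h2 := (hmain (fun _ => b) b hb).2 (n - 1) (by rw [hblen _ b]; omega)
    rw [Nat.zero_add, hbget _ b] at h2
    exact h2
  obtain ⟨b0, hb0⟩ := Fintype.exists_ne_of_one_lt_card hcard a
  constructor
  · -- first claim
    intro i hi1 hi2 hui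
    have hilt : i - 1 < u.length := by omega
    have hs : u[i - 1]? = some (u[i - 1]'hilt) := List.getElem?_eq_getElem hilt
    obtain ⟨x, hx⟩ : ∃ x : Fin α, u[i - 1]? = some (some x) := by
      cases hc : u[i - 1]'hilt with
      | none => exact absurd (by rw [hs, hc]) hui
      | some x => exact ⟨x, by rw [hs, hc]⟩
    have hfill : ∀ d : ℕ → Fin α, (fillW α u k n d)[i - 1]? = some x := by
      intro d
      rcases hmatch0 d b0 hb0 (i - 1) (by omega) with h | h
      · exact absurd h hui
      · rw [hTget d (i - 1) (by omega), hx] at h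
        cases hf : (fillW α u k n d)[i - 1]? with
        | none => rw [hf] at h; exact absurd h (by simp)
        | some y =>
          rw [hf] at h
          have hxy : x = y := by
            have h' : some (some x) = some (some y) := by simpa using h
            exact Option.some.inj (Option.some.inj h')
          rw [hxy]
    have hklt : k + i - 1 < u.length := by omega
    have hks : u[k + i - 1]? = some (u[k + i - 1]'hklt) := List.getElem?_eq_getElem hklt
    have hkidx : k + (i - 1) = k + i - 1 := by omega
    cases hc : u[k + i - 1]'hklt with
    | none =>
      exfalso
      obtain ⟨x', hx'⟩ := Fintype.exists_ne_of_one_lt_card hcard x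
      have h1 := hfill (fun _ => x')
      rw [fillW_getElem? α u k n (fun _ => x') (by omega : i - 1 < n),
        hkidx, hks, hc] at h1
      exact hx' (by simpa using h1)
    | some y =>
      have h1 := hfill (fun _ => y)
      rw [fillW_getElem? α u k n (fun _ => y) (by omega : i - 1 < n),
        hkidx, hks, hc] at h1
      have h1' : y = x := by simpa using h1
      rw [hks, hc, hx, h1']
  · -- second claim
    intro hund
    obtain ⟨x, hx⟩ : ∃ x : Fin α, u[n - 1]? = some (some x) := by
      have hlt : n - 1 < u.length := by omega
      have hs : u[n - 1]? = some (u[n - 1]'hlt) := List.getElem?_eq_getElem hlt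
      cases hc : u[n - 1]'hlt with
      | none => exact absurd (by rw [hs, hc]) hund
      | some x => exact ⟨x, by rw [hs, hc]⟩
    have hbx : ∀ b : Fin α, b ≠ a → b = x := by
      intro b hb
      rcases hmatchlast b hb with h | h
      · exact absurd h hund
      · rw [hx] at h
        exact (Option.some.inj (Option.some.inj h)).symm
    have hax : a ≠ x := by
      intro h
      exact hb0 (h ▸ hbx b0 hb0)
    have hα2 : α = 2 := by
      by_contra hne
      have h3 : 3 ≤ α := by omega
      have h2card : 1 < (Finset.univ.erase a : Finset (Fin α)).card := by
        rw [Finset.card_erase_of_mem (Finset.mem_univ a)]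
        simp only [Finset.card_univ, Fintype.card_fin]
        omega
      obtain ⟨b1, hb1, b2, hb2, hb12⟩ := Finset.one_lt_card.mp h2card
      have e1 := hbx b1 (Finset.ne_of_mem_erase hb1)
      have e2 := hbx b2 (Finset.ne_of_mem_erase hb2)
      exact hb12 (e1.trans e2.symm)
    refine ⟨hα2, fun x' hx' => ?_⟩
    have hxx : x' = x := Option.some.inj (Option.some.inj (hx'.symm.trans hx))
    exact ⟨a, hxx ▸ hax, ha⟩
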